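/- Let F be an algebraically closed field, l > 1 an integer coprime to the characteristic of F, ξ ∈ F a primitive l-th root of unity, and m an odd positive integer. Then the generalized Clifford algebra Clg(l,m) is isomorphic as an F-algebra to the direct sum of l copies of the matrix algebra M_{l^{(m-1)/2}}(F). -/

import Mathlib

set_option linter.unusedSectionVars false
set_option maxHeartbeats 800000

open Matrix Finset

namespace ClgAux

variable {F : Type*} [Field F] {l : ℕ} [NeZero l] {ξ : F} {k : ℕ}

def chi (ξ : F) (x : ZMod l) : F := ξ ^ x.val

lemma chi_zero : chi ξ (0 : ZMod l) = 1 := by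
  simp [chi, ZMod.val_zero]

lemma chi_add (hξ : ξ ^ l = 1) (x y : ZMod l) :
    chi ξ (x + y) = chi ξ x * chi ξ y := by
  have hmod : ξ ^ ((x.val + y.val) % l) = ξ ^ (x.val + y.val) := by
    conv_rhs => rw [← Nat.mod_add_div (x.val + y.val) l]
    rw [pow_add, pow_mul, hξ, one_pow, mul_one]
  rw [chi, ZMod.val_add, hmod, pow_add]; rfl

lemma chi_natCast (hξ : ξ ^ l = 1) (n : ℕ) : chi ξ ((n : ZMod l)) = ξ ^ n := by
  rw [chi, ZMod.val_natCast]
  conv_rhs => rw [← Nat.mod_add_div n l]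
  rw [pow_add, pow_mul, hξ, one_pow, mul_one]

lemma chi_ne_zero (hξ : ξ ^ l = 1) (x : ZMod l) : chi ξ x ≠ 0 := by
  have hξ0 : ξ ≠ 0 := by
    rintro rfl
    rw [zero_pow (NeZero.ne l)] at hξ
    exact zero_ne_one hξ
  exact pow_ne_zero _ hξ0

lemma chi_neg_mul (hξ : ξ ^ l = 1) (x : ZMod l) : chi ξ (-x) * chi ξ x = 1 := by
  rw [← chi_add hξ, neg_add_cancel, chi_zero]

/-- dot product on `(Fin k → ZMod l)`. -/
def dotV (s v : Fin k → ZMod l) : ZMod l := ∑ j, s j * v j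

lemma dotV_add_left (s s' v : Fin k → ZMod l) :
    dotV (s + s') v = dotV s v + dotV s' v := by
  simp [dotV, add_mul, Finset.sum_add_distrib]

lemma dotV_add_right (s v v' : Fin k → ZMod l) :
    dotV s (v + v') = dotV s v + dotV s v' := by
  simp [dotV, mul_add, Finset.sum_add_distrib]

lemma dotV_neg_left (s v : Fin k → ZMod l) : dotV (-s) v = - dotV s v := by
  simp [dotV]

lemma dotV_sub_right (s v v' : Fin k → ZMod l) :
    dotV s (v - v') = dotV s v - dotV s v' := by
  simp [dotV, mul_sub, Finset.sum_sub_distrib]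

lemma dotV_zero_left (v : Fin k → ZMod l) : dotV 0 v = 0 := by simp [dotV]
lemma dotV_zero_right (s : Fin k → ZMod l) : dotV s 0 = 0 := by simp [dotV]

lemma dotV_single_left (j : Fin k) (x : ZMod l) (v : Fin k → ZMod l) :
    dotV (Pi.single j x) v = x * v j := by
  rw [dotV, Finset.sum_eq_single j]
  · simp
  · intro b _ hb; simp [Pi.single_apply, hb]
  · simp

lemma dotV_smul_left (n : ℕ) (s v : Fin k → ZMod l) :
    dotV (n • s) v = n • dotV s v := by
  simp [dotV, Finset.smul_sum, smul_mul_assoc, mul_assoc]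

lemma dotV_smul_right (n : ℕ) (s v : Fin k → ZMod l) :
    dotV s (n • v) = n • dotV s v := by
  simp [dotV, Finset.smul_sum, mul_smul_comm, mul_left_comm]

lemma chi_nsmul (hξ : ξ ^ l = 1) (n : ℕ) (x : ZMod l) :
    chi ξ (n • x) = chi ξ x ^ n := by
  induction n with
  | zero => simp [chi_zero]
  | succ n ih => rw [succ_nsmul, chi_add hξ, ih, pow_succ]

/-- diagonal character matrix -/
def DeltaM (ξ : F) (s : Fin k → ZMod l) :
    Matrix (Fin k → ZMod l) (Fin k → ZMod l) F :=
  Matrix.diagonal fun v => chi ξ (dotV s v)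

/-- translation matrix -/
def TM (F : Type*) [Field F] {l k : ℕ} (u : Fin k → ZMod l) :
    Matrix (Fin k → ZMod l) (Fin k → ZMod l) F :=
  Matrix.of fun v w => if w = v - u then 1 else 0

lemma TM_mul (u u' : Fin k → ZMod l) : TM F u * TM F u' = TM F (u + u') := by
  ext v w
  rw [Matrix.mul_apply, Finset.sum_eq_single (v - u)
    (fun b _ hb => by rw [TM, Matrix.of_apply, if_neg hb, zero_mul]) (by simp)]
  simp [TM, sub_sub]

lemma TM_zero : TM F (0 : Fin k → ZMod l) = 1 := by
  ext v w
  simp [TM, Matrix.one_apply, eq_comm]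

lemma DeltaM_mul (hξ : ξ ^ l = 1) (s s' : Fin k → ZMod l) :
    DeltaM ξ s * DeltaM ξ s' = DeltaM ξ (s + s') := by
  rw [DeltaM, DeltaM, DeltaM, Matrix.diagonal_mul_diagonal]
  have : ∀ v, chi ξ (dotV s v) * chi ξ (dotV s' v) = chi ξ (dotV (s + s') v) :=
    fun v => by rw [dotV_add_left, chi_add hξ]
  simp only [this]

lemma DeltaM_zero : DeltaM ξ (0 : Fin k → ZMod l) = 1 := by
  rw [DeltaM]
  have : (fun v : Fin k → ZMod l => chi ξ (dotV 0 v)) = fun _ => (1 : F) := by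
    funext v; rw [dotV_zero_left, chi_zero]
  rw [this, Matrix.diagonal_one]

lemma TM_mul_DeltaM (hξ : ξ ^ l = 1) (s u : Fin k → ZMod l) :
    TM F u * DeltaM ξ s = chi ξ (-(dotV s u)) • (DeltaM ξ s * TM F u) := by
  ext v w
  rw [Matrix.smul_apply, Matrix.mul_apply, Matrix.mul_apply]
  rw [Finset.sum_eq_single w
    (fun b _ hb => by rw [DeltaM, Matrix.diagonal_apply, if_neg hb, mul_zero]) (by simp),
      Finset.sum_eq_single v
    (fun b _ hb => by rw [DeltaM, Matrix.diagonal_apply, if_neg (Ne.symm hb), zero_mul]) (by simp)]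
  rw [TM, DeltaM, Matrix.of_apply, Matrix.diagonal_apply, Matrix.diagonal_apply,
    if_pos rfl, if_pos rfl]
  split_ifs with h
  · subst h
    rw [mul_one, one_mul, smul_eq_mul, dotV_sub_right, sub_eq_neg_add, chi_add hξ]
  · simp

/-- The twisted basis elements. -/
def EM (ξ : F) (s u : Fin k → ZMod l) :
    Matrix (Fin k → ZMod l) (Fin k → ZMod l) F := DeltaM ξ s * TM F u

lemma EM_mul (hξ : ξ ^ l = 1) (s u s' u' : Fin k → ZMod l) :
    EM ξ s u * EM ξ s' u' = chi ξ (-(dotV s' u)) • EM ξ (s + s') (u + u') := by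
  rw [EM, EM, EM, mul_assoc, ← mul_assoc (TM F u), TM_mul_DeltaM hξ]
  rw [smul_mul_assoc, mul_smul_comm]
  congr 1
  rw [mul_assoc, TM_mul, ← mul_assoc, DeltaM_mul hξ]

lemma EM_zero : EM ξ (0 : Fin k → ZMod l) 0 = 1 := by
  rw [EM, DeltaM_zero, TM_zero, one_mul]

lemma EM_comm (hξ : ξ ^ l = 1) (s u s' u' : Fin k → ZMod l) :
    EM ξ s' u' * EM ξ s u
      = chi ξ (dotV s' u - dotV s u') • (EM ξ s u * EM ξ s' u') := by
  rw [EM_mul hξ, EM_mul hξ, smul_smul, add_comm s, add_comm u]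
  congr 1
  rw [← chi_add hξ]
  congr 1
  ring

lemma EM_pow (hξ : ξ ^ l = 1) (s u : Fin k → ZMod l) (n : ℕ) :
    EM ξ s u ^ n = chi ξ (-(dotV s u)) ^ n.choose 2 • EM ξ (n • s) (n • u) := by
  induction n with
  | zero => simp [EM_zero]
  | succ n ih =>
      rw [pow_succ, ih, smul_mul_assoc, EM_mul hξ, smul_smul, succ_nsmul s, succ_nsmul u]
      congr 1
      rw [dotV_smul_right, Nat.choose_succ_succ, Nat.choose_one_right, pow_add]
      have : chi ξ (-(n • dotV s u)) = chi ξ (-(dotV s u)) ^ n := by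
        rw [← smul_neg, chi_nsmul hξ]
      rw [this]; ring

lemma EM_pow_l (hξ : ξ ^ l = 1) (s u : Fin k → ZMod l) :
    EM ξ s u ^ l = chi ξ (-(dotV s u)) ^ l.choose 2 • 1 := by
  rw [EM_pow hξ]
  congr 1
  have hs : l • s = 0 := by
    funext j; simp [ZMod.natCast_self]
  have hu : l • u = 0 := by
    funext j; simp [ZMod.natCast_self]
  rw [hs, hu, EM_zero]


lemma chi_eq_one_iff (hξp : IsPrimitiveRoot ξ l) (x : ZMod l) :
    chi ξ x = 1 ↔ x = 0 := by
  constructor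
  · intro h
    have hdvd := (hξp.pow_eq_one_iff_dvd x.val).mp h
    have hlt : x.val < l := ZMod.val_lt x
    exact (ZMod.val_eq_zero x).mp (Nat.eq_zero_of_dvd_of_lt hdvd hlt)
  · rintro rfl; exact chi_zero

lemma sum_chi_dot (hξp : IsPrimitiveRoot ξ l) (d : Fin k → ZMod l) :
    ∑ s : Fin k → ZMod l, chi ξ (dotV s d)
      = if d = 0 then ((l : F) ^ k) else 0 := by
  have hξ : ξ ^ l = 1 := hξp.pow_eq_one
  split_ifs with hd
  · subst hd
    have : ∀ s : Fin k → ZMod l, chi ξ (dotV s 0) = 1 := fun s => by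
      rw [dotV_zero_right, chi_zero]
    simp only [this, Finset.sum_const, Finset.card_univ, nsmul_eq_mul, mul_one]
    rw [Fintype.card_pi]
    simp [ZMod.card]
  · -- pick a coordinate where d is nonzero and shift
    have : ∃ j, d j ≠ 0 := by
      by_contra hc
      push_neg at hc
      exact hd (funext hc)
    obtain ⟨j, hj⟩ := this
    have h1 : ∑ s : Fin k → ZMod l, chi ξ (dotV (s + Pi.single j 1) d)
        = ∑ s : Fin k → ZMod l, chi ξ (dotV s d) := by
      refine Fintype.sum_equiv (Equiv.addRight (Pi.single j (1 : ZMod l)))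
        (fun s => chi ξ (dotV (s + Pi.single j 1) d)) (fun s => chi ξ (dotV s d))
        (fun s => by rw [Equiv.coe_addRight])
    have h2 : ∀ s : Fin k → ZMod l,
        chi ξ (dotV (s + Pi.single j 1) d) = chi ξ (d j) * chi ξ (dotV s d) := fun s => by
      rw [dotV_add_left, chi_add hξ, dotV_single_left, one_mul, mul_comm]
    have hshift : chi ξ (d j) * (∑ s : Fin k → ZMod l, chi ξ (dotV s d))
        = ∑ s : Fin k → ZMod l, chi ξ (dotV s d) := by
      conv_rhs => rw [← h1]
      rw [Finset.mul_sum]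
      exact Finset.sum_congr rfl fun s _ => (h2 s).symm
    have hne : chi ξ (d j) ≠ 1 := fun hc => hj ((chi_eq_one_iff hξp _).mp hc)
    have hz : (chi ξ (d j) - 1) * (∑ s : Fin k → ZMod l, chi ξ (dotV s d)) = 0 := by
      rw [sub_mul, one_mul, hshift, sub_self]
    rcases mul_eq_zero.mp hz with h | h
    · exact absurd (sub_eq_zero.mp h) hne
    · exact h

lemma EM_apply (s u x y : Fin k → ZMod l) :
    EM ξ s u x y = if y = x - u then chi ξ (dotV s x) else 0 := by
  rw [EM, DeltaM, TM, Matrix.diagonal_mul]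
  simp only [Matrix.of_apply, mul_ite, mul_one, mul_zero]

lemma mem_span_EM (hchar : (l : F) ≠ 0) (hξp : IsPrimitiveRoot ξ l)
    (x : Matrix (Fin k → ZMod l) (Fin k → ZMod l) F) :
    x ∈ Submodule.span F
      (Set.range fun p : (Fin k → ZMod l) × (Fin k → ZMod l) => EM ξ p.1 p.2) := by
  have hξ : ξ ^ l = 1 := hξp.pow_eq_one
  have hstd : ∀ v w : Fin k → ZMod l, Matrix.single v w (1 : F) ∈
      Submodule.span F
        (Set.range fun p : (Fin k → ZMod l) × (Fin k → ZMod l) => EM ξ p.1 p.2) := by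
    intro v w
    have key : (∑ s : Fin k → ZMod l, chi ξ (-(dotV s v)) • EM ξ s (v - w))
        = ((l : F) ^ k) • Matrix.single v w (1 : F) := by
      ext a b
      rw [Matrix.sum_apply, Matrix.smul_apply]
      simp only [Matrix.smul_apply, EM_apply, smul_eq_mul, mul_ite, mul_one, mul_zero]
      by_cases hb : b = a - (v - w)
      · simp only [if_pos hb]
        have : ∀ s : Fin k → ZMod l, chi ξ (-(dotV s v)) * chi ξ (dotV s a)
            = chi ξ (dotV s (a - v)) := fun s => by
          rw [dotV_sub_right, sub_eq_neg_add, chi_add hξ]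
        rw [Finset.sum_congr rfl fun s _ => this s, sum_chi_dot hξp]
        by_cases hav : a = v
        · subst hav
          have hbw : b = w := by rw [hb]; abel
          subst hbw
          simp [Matrix.single, sub_self]
        · have : a - v ≠ 0 := sub_ne_zero_of_ne hav
          rw [if_neg this]
          have : ¬(v = a ∧ w = b) := fun ⟨h1, _⟩ => hav h1.symm
          simp [Matrix.single, this]
      · simp only [if_neg hb, Finset.sum_const_zero]
        have : ¬(v = a ∧ w = b) := by
          rintro ⟨rfl, rfl⟩
          exact hb (by abel)
        simp [Matrix.single, this]
    have hmem : (∑ s : Fin k → ZMod l, chi ξ (-(dotV s v)) • EM ξ s (v - w)) ∈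
        Submodule.span F
          (Set.range fun p : (Fin k → ZMod l) × (Fin k → ZMod l) => EM ξ p.1 p.2) := by
      refine Submodule.sum_mem _ fun s _ => Submodule.smul_mem _ _ ?_
      exact Submodule.subset_span ⟨(s, v - w), rfl⟩
    rw [key] at hmem
    have hlk : ((l : F) ^ k) ≠ 0 := pow_ne_zero _ hchar
    have := Submodule.smul_mem _ ((l : F) ^ k)⁻¹ hmem
    rwa [smul_smul, inv_mul_cancel₀ hlk, one_smul] at this
  rw [Matrix.matrix_eq_sum_single x]
  refine Submodule.sum_mem _ fun v _ => Submodule.sum_mem _ fun w _ => ?_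
  have : Matrix.single v w (x v w) = (x v w) • Matrix.single v w (1 : F) := by
    simp
  rw [this]
  exact Submodule.smul_mem _ _ (hstd v w)


lemma dotV_comm (s v : Fin k → ZMod l) : dotV s v = dotV v s := by
  simp [dotV, mul_comm]

lemma chi_one (hl : 1 < l) : chi ξ (1 : ZMod l) = ξ := by
  have : Fact (1 < l) := ⟨hl⟩
  rw [chi, ZMod.val_one, pow_one]

/-- `s`-data of the `i`-th generator. -/
def sD (l k : ℕ) (i : ℕ) : Fin k → ZMod l := fun j => if 2 * (j : ℕ) < i then 1 else 0

/-- `u`-data of the `i`-th generator. -/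
def uD (l k : ℕ) (i : ℕ) : Fin k → ZMod l := fun j => if (j : ℕ) = i / 2 then 1 else 0

lemma uD_eq_single (i : ℕ) (hi : i / 2 < k) :
    uD l k i = Pi.single (⟨i / 2, hi⟩ : Fin k) (1 : ZMod l) := by
  funext j
  rw [uD, Pi.single_apply]
  by_cases h : (j : ℕ) = i / 2
  · rw [if_pos h, if_pos (Fin.ext h)]
  · rw [if_neg h, if_neg (fun hc => h (by rw [hc]))]

lemma uD_eq_zero (i : ℕ) (hi : ¬ i / 2 < k) : uD l k i = 0 := by
  funext j
  rw [uD, if_neg (fun hc => hi (by rw [← hc]; exact j.isLt)), Pi.zero_apply]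

lemma dotV_sD_uD_of_lt (i i' : ℕ) (hii' : i < i') (hi' : i' ≤ 2 * k) :
    dotV (sD l k i') (uD l k i) = 1 := by
  have h2 : i / 2 < k := by omega
  have hcoe : ((⟨i / 2, h2⟩ : Fin k) : ℕ) = i / 2 := rfl
  rw [dotV_comm, uD_eq_single i h2, dotV_single_left, one_mul, sD, hcoe,
    if_pos (by omega : 2 * (i / 2) < i')]

lemma dotV_sD_uD_of_gt (i i' : ℕ) (hii' : i < i') :
    dotV (sD l k i) (uD l k i') = 0 := by
  by_cases h2 : i' / 2 < k
  · have hcoe : ((⟨i' / 2, h2⟩ : Fin k) : ℕ) = i' / 2 := rfl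
    rw [dotV_comm, uD_eq_single i' h2, dotV_single_left, one_mul, sD, hcoe,
      if_neg (by omega : ¬ 2 * (i' / 2) < i)]
  · rw [uD_eq_zero i' h2, dotV_zero_right]

lemma dotV_sD_uD_self (i : ℕ) (hi : i ≤ 2 * k) :
    dotV (sD l k i) (uD l k i) = if i % 2 = 1 then 1 else 0 := by
  by_cases h2 : i / 2 < k
  · have hcoe : ((⟨i / 2, h2⟩ : Fin k) : ℕ) = i / 2 := rfl
    rw [dotV_comm, uD_eq_single i h2, dotV_single_left, one_mul, sD, hcoe]
    by_cases hodd : i % 2 = 1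
    · rw [if_pos hodd, if_pos (by omega : 2 * (i / 2) < i)]
    · rw [if_neg hodd, if_neg (by omega : ¬ 2 * (i / 2) < i)]
  · rw [uD_eq_zero i h2, dotV_zero_right, if_neg (by omega)]

/-- Matrix image of the `i`-th generator in the `t`-th block. -/
def genM (ξ ν : F) (k : ℕ) (t : ZMod l) (i : ℕ) :
    Matrix (Fin k → ZMod l) (Fin k → ZMod l) F :=
  (if i = 2 * k then chi ξ t else if i % 2 = 1 then ν else 1) • EM ξ (sD l k i) (uD l k i)

lemma chi_pow_l (hξ : ξ ^ l = 1) (t : ZMod l) : chi ξ t ^ l = 1 := by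
  rw [chi, ← pow_mul, mul_comm, pow_mul, hξ, one_pow]

lemma genM_pow_l (hl : 1 < l) (hξp : IsPrimitiveRoot ξ l) {ν : F}
    (hν : ν ^ l = ξ ^ l.choose 2) (t : ZMod l) (i : ℕ) (hi : i ≤ 2 * k) :
    genM ξ ν k t i ^ l = 1 := by
  have hξ : ξ ^ l = 1 := hξp.pow_eq_one
  rw [genM, smul_pow, EM_pow_l hξ, dotV_sD_uD_self i hi, smul_smul]
  by_cases h2k : i = 2 * k
  · rw [if_pos h2k, if_neg (by omega : ¬ i % 2 = 1), neg_zero, chi_zero, one_pow, mul_one,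
      chi_pow_l hξ, one_smul]
  · rw [if_neg h2k]
    by_cases hodd : i % 2 = 1
    · rw [if_pos hodd, if_pos hodd, hν]
      have hx : chi ξ (-(1 : ZMod l)) * ξ = 1 := by
        have h := chi_neg_mul hξ (1 : ZMod l)
        rwa [chi_one hl] at h
      have : ξ ^ l.choose 2 * chi ξ (-(1 : ZMod l)) ^ l.choose 2 = 1 := by
        rw [← mul_pow, mul_comm, hx, one_pow]
      rw [this, one_smul]
    · rw [if_neg hodd, if_neg hodd, neg_zero, chi_zero, one_pow, one_pow, mul_one, one_smul]

lemma genM_comm (hl : 1 < l) (hξp : IsPrimitiveRoot ξ l) (ν : F) (t : ZMod l)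
    (i i' : ℕ) (hii' : i < i') (hi' : i' ≤ 2 * k) :
    genM ξ ν k t i' * genM ξ ν k t i = ξ • (genM ξ ν k t i * genM ξ ν k t i') := by
  have hξ : ξ ^ l = 1 := hξp.pow_eq_one
  simp only [genM]
  rw [smul_mul_assoc, mul_smul_comm, smul_mul_assoc, mul_smul_comm,
    EM_comm hξ (sD l k i) (uD l k i) (sD l k i') (uD l k i'),
    dotV_sD_uD_of_lt i i' hii' hi', dotV_sD_uD_of_gt i i' hii', sub_zero, chi_one hl]
  simp only [smul_smul]
  congr 1
  ring


end ClgAux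

/-- The defining relations of the generalized Clifford algebra: `xᵢ^l = 1` and
`xⱼ xᵢ = ξ • (xᵢ xⱼ)` for `i < j`. -/
inductive ClgRel (F : Type*) [Field F] (l : ℕ) (ξ : F) {I : Type*} [LinearOrder I] :
    FreeAlgebra F I → FreeAlgebra F I → Prop
  | pow (i : I) : ClgRel F l ξ (FreeAlgebra.ι F i ^ l) 1
  | comm {i j : I} (hij : i < j) :
      ClgRel F l ξ (FreeAlgebra.ι F j * FreeAlgebra.ι F i)
        (ξ • (FreeAlgebra.ι F i * FreeAlgebra.ι F j))

/-- The generalized Clifford algebra on a linearly ordered set of generators. -/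
abbrev Clg (F : Type*) [Field F] (l : ℕ) (ξ : F) (I : Type*) [LinearOrder I] :=
  RingQuot (ClgRel F l ξ (I := I))

namespace ClgAux

variable (F : Type*) [Field F] (l : ℕ) (ξ : F) {m : ℕ}

/-- The generators of the generalized Clifford algebra. -/
def XC (i : Fin m) : Clg F l ξ (Fin m) :=
  RingQuot.mkAlgHom F (ClgRel F l ξ) (FreeAlgebra.ι F i)

lemma XC_pow_l (i : Fin m) : XC F l ξ i ^ l = 1 := by
  rw [XC, ← map_pow, RingQuot.mkAlgHom_rel F (ClgRel.pow i), _root_.map_one]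

lemma XC_swap {i j : Fin m} (hij : i < j) :
    XC F l ξ j * XC F l ξ i = ξ • (XC F l ξ i * XC F l ξ j) := by
  simp only [XC]
  rw [← _root_.map_mul, RingQuot.mkAlgHom_rel F (ClgRel.comm hij), _root_.map_smul,
    _root_.map_mul]

lemma XC_pow_swap {i j : Fin m} (hij : i < j) (n : ℕ) :
    XC F l ξ j ^ n * XC F l ξ i = ξ ^ n • (XC F l ξ i * XC F l ξ j ^ n) := by
  induction n with
  | zero => simp
  | succ n ih =>
      rw [pow_succ, mul_assoc, XC_swap F l ξ hij, mul_smul_comm, ← mul_assoc, ih,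
        smul_mul_assoc, smul_smul, mul_assoc, ← pow_succ, ← pow_succ']

lemma prod_swap (a : Fin m → ℕ) (i : Fin m) (L : List (Fin m)) (hL : ∀ j ∈ L, i < j) :
    ∃ c : F, (L.map fun j => XC F l ξ j ^ a j).prod * XC F l ξ i
      = c • (XC F l ξ i * (L.map fun j => XC F l ξ j ^ a j).prod) := by
  induction L with
  | nil => exact ⟨1, by simp⟩
  | cons j L ih =>
      obtain ⟨c, hc⟩ := ih (fun x hx => hL x (List.mem_cons_of_mem j hx))
      refine ⟨c * ξ ^ a j, ?_⟩
      rw [List.map_cons, List.prod_cons, mul_assoc, hc, mul_smul_comm,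
        ← mul_assoc, XC_pow_swap F l ξ (hL j List.mem_cons_self) (a j),
        smul_mul_assoc, smul_smul, mul_assoc]

/-- Monomials in the generalized Clifford algebra. -/
def monC (a : Fin m → ZMod l) : Clg F l ξ (Fin m) :=
  ((List.finRange m).map fun i => XC F l ξ i ^ (a i).val).prod

lemma monC_zero [NeZero l] : monC F l ξ (0 : Fin m → ZMod l) = 1 := by
  rw [monC]
  apply List.prod_eq_one
  intro x hx
  simp only [List.mem_map] at hx
  obtain ⟨i, _, rfl⟩ := hx
  simp [ZMod.val_zero]

lemma pow_mod_l {A : Type*} [Monoid A] (x : A) (hx : x ^ l = 1) (n : ℕ) :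
    x ^ n = x ^ (n % l) := by
  conv_lhs => rw [← Nat.mod_add_div n l, pow_add, pow_mul, hx, one_pow, mul_one]

lemma monC_mul_XC [NeZero l] (hl : 1 < l) (a : Fin m → ZMod l) (i : Fin m) :
    ∃ c : F, monC F l ξ a * XC F l ξ i
      = c • monC F l ξ (Function.update a i (a i + 1)) := by
  have : Fact (1 < l) := ⟨hl⟩
  have hlen : (i : ℕ) < (List.finRange m).length := by
    rw [List.length_finRange]; exact i.isLt
  have hget : (List.finRange m)[(i : ℕ)] = i := by
    simp [List.getElem_finRange, Fin.cast]
  have hsplit : List.finRange m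
      = (List.finRange m).take i ++ i :: (List.finRange m).drop (i + 1) := by
    conv_lhs => rw [← List.take_append_drop (i : ℕ) (List.finRange m)]
    rw [List.drop_eq_getElem_cons hlen, hget]
  have hpw : (List.finRange m).Pairwise (· < ·) := List.pairwise_lt_finRange m
  rw [hsplit] at hpw
  have hpw2 := (List.pairwise_append.mp hpw).2.1
  rw [List.pairwise_cons] at hpw2
  have hdrop : ∀ j ∈ (List.finRange m).drop ((i : ℕ) + 1), i < j := hpw2.1
  have htake : ∀ j ∈ (List.finRange m).take (i : ℕ), j < i := by
    intro j hj
    exact (List.pairwise_append.mp hpw).2.2 j hj i List.mem_cons_self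
  -- the three pieces
  set f : Fin m → Clg F l ξ (Fin m) := fun j => XC F l ξ j ^ (a j).val with hf
  set a' : Fin m → ZMod l := Function.update a i (a i + 1) with ha'
  set f' : Fin m → Clg F l ξ (Fin m) := fun j => XC F l ξ j ^ (a' j).val with hf'
  have hmap_take : ((List.finRange m).take (i : ℕ)).map f'
      = ((List.finRange m).take (i : ℕ)).map f := by
    apply List.map_congr_left
    intro j hj
    have : j ≠ i := ne_of_lt (htake j hj)
    simp [hf, hf', ha', Function.update_of_ne this]
  have hmap_drop : ((List.finRange m).drop ((i : ℕ) + 1)).map f'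
      = ((List.finRange m).drop ((i : ℕ) + 1)).map f := by
    apply List.map_congr_left
    intro j hj
    have : j ≠ i := ne_of_gt (hdrop j hj)
    simp [hf, hf', ha', Function.update_of_ne this]
  obtain ⟨c, hc⟩ := prod_swap F l ξ (fun j => (a j).val) i _ hdrop
  refine ⟨c, ?_⟩
  rw [monC, monC, hsplit]
  rw [List.map_append, List.prod_append, List.map_cons, List.prod_cons,
    List.map_append, List.prod_append, List.map_cons, List.prod_cons]
  rw [hmap_take, hmap_drop]
  rw [mul_assoc, mul_assoc, hc, mul_smul_comm, mul_smul_comm]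
  congr 2
  rw [← mul_assoc, ← pow_succ]
  have hval : ((a i + 1).val) = ((a i).val + 1) % l := by
    rw [ZMod.val_add, ZMod.val_one]
  have hxpow : XC F l ξ i ^ ((a i).val + 1) = XC F l ξ i ^ ((a' i).val) := by
    rw [ha', Function.update_self, hval]
    exact pow_mod_l l (XC F l ξ i) (XC_pow_l F l ξ i) _
  rw [hxpow]


lemma span_monC [NeZero l] (hl : 1 < l) :
    Submodule.span F (Set.range (monC F l ξ (m := m))) = ⊤ := by
  set S := Submodule.span F (Set.range (monC F l ξ (m := m))) with hS
  have hmulX : ∀ (i : Fin m), ∀ s ∈ S, s * XC F l ξ i ∈ S := by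
    intro i s hs
    induction hs using Submodule.span_induction with
    | mem x hx =>
        obtain ⟨a, rfl⟩ := hx
        obtain ⟨c, hc⟩ := monC_mul_XC F l ξ hl a i
        rw [hc]
        exact Submodule.smul_mem _ _ (Submodule.subset_span ⟨_, rfl⟩)
    | zero => rw [zero_mul]; exact Submodule.zero_mem _
    | add x y _ _ hx hy => rw [add_mul]; exact Submodule.add_mem _ hx hy
    | smul r x _ hx => rw [smul_mul_assoc]; exact Submodule.smul_mem _ _ hx
  let T : Subalgebra F (Clg F l ξ (Fin m)) :=
    { carrier := {x | ∀ s ∈ S, s * x ∈ S}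
      mul_mem' := fun {x y} hx hy s hs => by
        rw [← mul_assoc]; exact hy _ (hx _ hs)
      one_mem' := fun s hs => by rw [mul_one]; exact hs
      add_mem' := fun {x y} hx hy s hs => by
        rw [mul_add]; exact Submodule.add_mem _ (hx _ hs) (hy _ hs)
      algebraMap_mem' := fun r s hs => by
        rw [← Algebra.commutes r s, ← Algebra.smul_def]
        exact Submodule.smul_mem _ _ hs }
  have hXT : ∀ i : Fin m, XC F l ξ i ∈ T := fun i s hs => hmulX i s hs
  have hTtop : (⊤ : Subalgebra F (Clg F l ξ (Fin m))) ≤ T := by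
    have h2 : Set.range (XC F l ξ (m := m))
        = (RingQuot.mkAlgHom F (ClgRel F l ξ)) '' (Set.range (FreeAlgebra.ι F)) := by
      rw [← Set.range_comp]; rfl
    have h1 : Algebra.adjoin F (Set.range (XC F l ξ (m := m))) = ⊤ := by
      rw [h2, ← AlgHom.map_adjoin, FreeAlgebra.adjoin_range_ι, Algebra.map_top]
      exact (AlgHom.range_eq_top _).mpr
        (RingQuot.mkAlgHom_surjective F (ClgRel F l ξ))
    rw [← h1]
    refine Algebra.adjoin_le ?_
    rintro x ⟨i, rfl⟩
    exact hXT i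
  have h1S : (1 : Clg F l ξ (Fin m)) ∈ S := by
    rw [← monC_zero F l ξ]
    exact Submodule.subset_span ⟨0, rfl⟩
  rw [eq_top_iff]
  intro x _
  have hx : x ∈ T := hTtop trivial
  have := hx 1 h1S
  rwa [one_mul] at this

lemma finite_Clg [NeZero l] (hl : 1 < l) : Module.Finite F (Clg F l ξ (Fin m)) := by
  classical
  exact ⟨⟨(Set.finite_range (monC F l ξ (m := m))).toFinset, by
    rw [Set.Finite.coe_toFinset]; exact span_monC F l ξ hl⟩⟩

lemma finrank_Clg_le [NeZero l] (hl : 1 < l) :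
    Module.finrank F (Clg F l ξ (Fin m)) ≤ l ^ m := by
  classical
  have h2 : Module.finrank F
      ↥(Submodule.span F (Set.range (monC F l ξ (m := m)))) ≤ l ^ m := by
    refine le_trans (finrank_span_le_card _) ?_
    rw [Set.toFinset_card]
    refine le_trans (Fintype.card_range_le _) ?_
    rw [Fintype.card_fun, ZMod.card, Fintype.card_fin]
  rw [span_monC F l ξ hl, finrank_top] at h2
  exact h2


variable {F l ξ}

/-- The block-`t` representation of the generalized Clifford algebra. -/
def PhiT [NeZero l] (hl : 1 < l) (hξp : IsPrimitiveRoot ξ l) {ν : F}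
    (hν : ν ^ l = ξ ^ l.choose 2) (k : ℕ) (hm : m = 2 * k + 1) (t : ZMod l) :
    Clg F l ξ (Fin m) →ₐ[F] Matrix (Fin k → ZMod l) (Fin k → ZMod l) F :=
  RingQuot.liftAlgHom F ⟨FreeAlgebra.lift F (fun i : Fin m => genM ξ ν k t (i : ℕ)), by
    intro x y r
    cases r with
    | pow i =>
        simp only [map_pow, _root_.map_one, FreeAlgebra.lift_ι_apply]
        exact genM_pow_l hl hξp hν t (i : ℕ) (by have := i.isLt; omega)
    | @comm i j hij =>
        simp only [_root_.map_mul, _root_.map_smul, FreeAlgebra.lift_ι_apply]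
        exact genM_comm hl hξp ν t (i : ℕ) (j : ℕ) hij (by have := j.isLt; omega)⟩

lemma PhiT_XC [NeZero l] (hl : 1 < l) (hξp : IsPrimitiveRoot ξ l) {ν : F}
    (hν : ν ^ l = ξ ^ l.choose 2) (k : ℕ) (hm : m = 2 * k + 1) (t : ZMod l) (i : Fin m) :
    PhiT hl hξp hν k hm t (XC F l ξ i) = genM ξ ν k t (i : ℕ) := by
  rw [PhiT, XC, RingQuot.liftAlgHom_mkAlgHom_apply, FreeAlgebra.lift_ι_apply]

/-- The full representation into `l` blocks. -/
def PsiA [NeZero l] (hl : 1 < l) (hξp : IsPrimitiveRoot ξ l) {ν : F}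
    (hν : ν ^ l = ξ ^ l.choose 2) (k : ℕ) (hm : m = 2 * k + 1) :
    Clg F l ξ (Fin m) →ₐ[F]
      (ZMod l → Matrix (Fin k → ZMod l) (Fin k → ZMod l) F) :=
  Pi.algHom F _ (fun t => PhiT hl hξp hν k hm t)

lemma PsiA_surjective [NeZero l] (hl : 1 < l) (hchar : (l : F) ≠ 0)
    (hξp : IsPrimitiveRoot ξ l) {ν : F}
    (hν : ν ^ l = ξ ^ l.choose 2) (k : ℕ) (hm : m = 2 * k + 1) :
    Function.Surjective (PsiA hl hξp hν k hm) := by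
  have hξ : ξ ^ l = 1 := hξp.pow_eq_one
  have hν0 : ν ≠ 0 := by
    intro h
    rw [h, zero_pow (NeZero.ne l)] at hν
    exact (pow_ne_zero _ (fun hz : ξ = 0 => by
      rw [hz, zero_pow (NeZero.ne l)] at hξ; exact zero_ne_one hξ)) hν.symm
  set Ψ := PsiA hl hξp hν k hm with hΨ
  rw [← AlgHom.range_eq_top]
  -- the subalgebra of matrices whose constant tuple lies in the range
  set R : Subalgebra F (Matrix (Fin k → ZMod l) (Fin k → ZMod l) F) :=
    Subalgebra.comap (Pi.constAlgHom F (ZMod l)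
      (Matrix (Fin k → ZMod l) (Fin k → ZMod l) F)) Ψ.range with hR
  have hmemR : ∀ x, x ∈ R ↔
      (Function.const (ZMod l) x) ∈ Ψ.range := fun x => Iff.rfl
  -- generators with index < 2k give constant tuples
  have hgen : ∀ i : Fin m, (i : ℕ) < 2 * k →
      EM ξ (sD l k (i : ℕ)) (uD l k (i : ℕ)) ∈ R := by
    intro i hi
    have hne : (i : ℕ) ≠ 2 * k := by omega
    have him : Ψ (XC F l ξ i) ∈ Ψ.range := ⟨_, rfl⟩
    have hval : Ψ (XC F l ξ i)
        = Function.const (ZMod l)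
          ((if (i : ℕ) % 2 = 1 then ν else 1) • EM ξ (sD l k (i : ℕ)) (uD l k (i : ℕ))) := by
      funext t
      show PhiT hl hξp hν k hm t (XC F l ξ i) = _
      rw [PhiT_XC, genM, if_neg hne]
      rfl
    rw [hval] at him
    have hc0 : (if (i : ℕ) % 2 = 1 then ν else 1) ≠ 0 := by
      split_ifs
      · exact hν0
      · exact one_ne_zero
    rw [hmemR]
    have h2 := Ψ.range.smul_mem him (if (i : ℕ) % 2 = 1 then ν else 1)⁻¹
    have h3 : (if (i : ℕ) % 2 = 1 then ν else 1)⁻¹ •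
        Function.const (ZMod l)
          ((if (i : ℕ) % 2 = 1 then ν else 1) • EM ξ (sD l k (i : ℕ)) (uD l k (i : ℕ)))
        = Function.const (ZMod l) (EM ξ (sD l k (i : ℕ)) (uD l k (i : ℕ))) := by
      funext t
      show (if (i : ℕ) % 2 = 1 then ν else 1)⁻¹ •
        ((if (i : ℕ) % 2 = 1 then ν else 1) • EM ξ (sD l k (i : ℕ)) (uD l k (i : ℕ))) = _
      rw [smul_smul, inv_mul_cancel₀ hc0, one_smul]
      rfl
    rwa [h3] at h2
  -- the set of pairs that occur, up to nonzero scalar, in R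
  set P : ((Fin k → ZMod l) × (Fin k → ZMod l)) → Prop :=
    fun p => ∃ γ : F, γ ≠ 0 ∧ γ • EM ξ p.1 p.2 ∈ R with hP
  have hP0 : P (0, 0) := ⟨1, one_ne_zero, by
    rw [one_smul, EM_zero]; exact R.one_mem⟩
  have hPadd : ∀ p q, P p → P q → P (p + q) := by
    rintro ⟨s, u⟩ ⟨s', u'⟩ ⟨γ, hγ, hγR⟩ ⟨γ', hγ', hγR'⟩
    refine ⟨γ * γ' * chi ξ (-(dotV s' u)), ?_, ?_⟩
    · exact mul_ne_zero (mul_ne_zero hγ hγ') (chi_ne_zero hξ _)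
    · have := R.mul_mem hγR hγR'
      rw [smul_mul_assoc, mul_smul_comm, EM_mul hξ, smul_smul, smul_smul] at this
      simpa [mul_assoc] using this
  have hPsmul : ∀ (n : ℕ) p, P p → P (n • p) := by
    intro n
    induction n with
    | zero => intro p _; rw [zero_smul]; exact hP0
    | succ n ih =>
        intro p hp
        have := hPadd _ _ (ih p hp) hp
        rwa [← succ_nsmul] at this
  have hPneg : ∀ p, P p → P (-p) := by
    intro p hp
    have := hPsmul (l - 1) p hp
    have hlp : (l - 1) • p = -p := by
      have h1 : ((l - 1 : ℕ) : ZMod l) = -1 := by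
        have : ((l : ℕ) : ZMod l) = 0 := ZMod.natCast_self l
        rw [Nat.cast_sub (by omega : 1 ≤ l), this, Nat.cast_one, zero_sub]
      have h2 : ∀ v : Fin k → ZMod l, (l - 1) • v = -v := by
        intro v; funext j
        rw [Pi.smul_apply, Pi.neg_apply, nsmul_eq_mul, h1, neg_one_mul]
      cases p with
      | mk s u => rw [Prod.smul_mk, h2, h2]; rfl
    rwa [hlp] at this
  -- base pairs
  have hpa : ∀ j : Fin k, P (sD l k (2 * (j : ℕ)), uD l k (2 * (j : ℕ))) := by
    intro j
    have hj : 2 * (j : ℕ) < 2 * k := by have := j.isLt; omega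
    have := hgen ⟨2 * (j : ℕ), by omega⟩ (by simpa using hj)
    exact ⟨1, one_ne_zero, by rwa [one_smul]⟩
  have hpb : ∀ j : Fin k, P (sD l k (2 * (j : ℕ) + 1), uD l k (2 * (j : ℕ) + 1)) := by
    intro j
    have hj : 2 * (j : ℕ) + 1 < 2 * k := by have := j.isLt; omega
    have := hgen ⟨2 * (j : ℕ) + 1, by omega⟩ (by simpa using hj)
    exact ⟨1, one_ne_zero, by rwa [one_smul]⟩
  -- single generators of the pair monoid
  have huDj : ∀ j : Fin k, uD l k (2 * (j : ℕ)) = Pi.single j 1 := by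
    intro j
    have h : (2 * (j : ℕ)) / 2 < k := by have := j.isLt; omega
    have hjj : (⟨2 * (j : ℕ) / 2, h⟩ : Fin k) = j := by
      apply Fin.ext
      exact (by omega : 2 * (j : ℕ) / 2 = (j : ℕ))
    rw [uD_eq_single _ h, hjj]
  have huDj' : ∀ j : Fin k, uD l k (2 * (j : ℕ) + 1) = uD l k (2 * (j : ℕ)) := by
    intro j
    funext j'
    rw [uD, uD, (by omega : (2 * (j : ℕ) + 1) / 2 = 2 * (j : ℕ) / 2)]
  have key1 : ∀ j : Fin k, P (Pi.single j 1, 0) := by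
    intro j
    have h := hPadd _ _ (hpb j) (hPneg _ (hpa j))
    have hpair : ((sD l k (2 * (j : ℕ) + 1), uD l k (2 * (j : ℕ) + 1))
        + -(sD l k (2 * (j : ℕ)), uD l k (2 * (j : ℕ))))
        = ((Pi.single j 1 : Fin k → ZMod l), (0 : Fin k → ZMod l)) := by
      apply Prod.ext
      · show sD l k (2 * (j : ℕ) + 1) + -(sD l k (2 * (j : ℕ))) = Pi.single j 1
        funext j'
        simp only [Pi.add_apply, Pi.neg_apply, sD, Pi.single_apply]
        by_cases h1 : (j' : ℕ) = (j : ℕ)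
        · rw [if_pos (by omega), if_neg (by omega), if_pos (Fin.ext h1), neg_zero, add_zero]
        · rw [if_neg (fun hc : j' = j => h1 (congrArg Fin.val hc))]
          by_cases h2 : (j' : ℕ) < (j : ℕ)
          · rw [if_pos (by omega), if_pos (by omega), add_neg_cancel]
          · rw [if_neg (by omega), if_neg (by omega), neg_zero, add_zero]
      · show uD l k (2 * (j : ℕ) + 1) + -(uD l k (2 * (j : ℕ))) = 0
        rw [huDj' j, add_neg_cancel]
    rwa [hpair] at h
  have hval_smul : ∀ (x : ZMod l) (j : Fin k),
      (Pi.single j x : Fin k → ZMod l) = x.val • Pi.single j 1 := by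
    intro x j
    funext j'
    rw [Pi.smul_apply, Pi.single_apply, Pi.single_apply, smul_ite, smul_zero]
    congr 1
    rw [nsmul_eq_mul, mul_one, ZMod.natCast_val, ZMod.cast_id]
  have keyS : ∀ g : Fin k → ZMod l, P (g, 0) := by
    intro g
    have hone : ∀ j : Fin k, P (Pi.single j (g j), 0) := by
      intro j
      have := hPsmul ((g j).val) _ (key1 j)
      have heq : ((g j).val • ((Pi.single j 1 : Fin k → ZMod l), (0 : Fin k → ZMod l)))
          = ((Pi.single j (g j) : Fin k → ZMod l), (0 : Fin k → ZMod l)) := by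
        apply Prod.ext
        · show (g j).val • (Pi.single j 1 : Fin k → ZMod l) = Pi.single j (g j)
          exact (hval_smul _ j).symm
        · show (g j).val • (0 : Fin k → ZMod l) = 0
          rw [smul_zero]
      rwa [heq] at this
    have hA : ∀ A : Finset (Fin k), P (∑ j ∈ A, Pi.single j (g j), 0) := by
      intro A
      induction A using Finset.induction with
      | empty => simpa using hP0
      | insert a A2 hnot ih =>
          have := hPadd _ _ (hone a) ih
          have heq : ((Pi.single a (g a) : Fin k → ZMod l), (0 : Fin k → ZMod l))
              + (∑ j ∈ A2, Pi.single j (g j), 0)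
              = (∑ j ∈ insert a A2, Pi.single j (g j), (0 : Fin k → ZMod l)) := by
            rw [Finset.sum_insert hnot]
            apply Prod.ext
            · rfl
            · show (0 : Fin k → ZMod l) + 0 = 0; rw [add_zero]
          rwa [heq] at this
    have := hA Finset.univ
    rwa [Finset.univ_sum_single] at this
  have key2 : ∀ j : Fin k, P (0, Pi.single j 1) := by
    intro j
    have h := hPadd _ _ (hpa j) (hPneg _ (keyS (sD l k (2 * (j : ℕ)))))
    have hpair : ((sD l k (2 * (j : ℕ)), uD l k (2 * (j : ℕ)))
        + -((sD l k (2 * (j : ℕ))), (0 : Fin k → ZMod l)))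
        = ((0 : Fin k → ZMod l), (Pi.single j 1 : Fin k → ZMod l)) := by
      apply Prod.ext
      · show sD l k (2 * (j : ℕ)) + -(sD l k (2 * (j : ℕ))) = 0
        rw [add_neg_cancel]
      · show uD l k (2 * (j : ℕ)) + -(0 : Fin k → ZMod l) = Pi.single j 1
        rw [neg_zero, add_zero, huDj]
    rwa [hpair] at h
  have keyU : ∀ g : Fin k → ZMod l, P (0, g) := by
    intro g
    have hone : ∀ j : Fin k, P (0, Pi.single j (g j)) := by
      intro j
      have := hPsmul ((g j).val) _ (key2 j)
      have heq : ((g j).val • ((0 : Fin k → ZMod l), (Pi.single j 1 : Fin k → ZMod l)))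
          = ((0 : Fin k → ZMod l), (Pi.single j (g j) : Fin k → ZMod l)) := by
        apply Prod.ext
        · show (g j).val • (0 : Fin k → ZMod l) = 0
          rw [smul_zero]
        · show (g j).val • (Pi.single j 1 : Fin k → ZMod l) = Pi.single j (g j)
          exact (hval_smul _ j).symm
      rwa [heq] at this
    have hA : ∀ A : Finset (Fin k), P (0, ∑ j ∈ A, Pi.single j (g j)) := by
      intro A
      induction A using Finset.induction with
      | empty => simpa using hP0
      | insert a A2 hnot ih =>
          have := hPadd _ _ (hone a) ih
          have heq : ((0 : Fin k → ZMod l), (Pi.single a (g a) : Fin k → ZMod l))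
              + (0, ∑ j ∈ A2, Pi.single j (g j))
              = ((0 : Fin k → ZMod l), ∑ j ∈ insert a A2, Pi.single j (g j)) := by
            rw [Finset.sum_insert hnot]
            apply Prod.ext
            · show (0 : Fin k → ZMod l) + 0 = 0; rw [add_zero]
            · rfl
          rwa [heq] at this
    have := hA Finset.univ
    rwa [Finset.univ_sum_single] at this
  have keyAll : ∀ s u : Fin k → ZMod l, P (s, u) := by
    intro s u
    have := hPadd _ _ (keyS s) (keyU u)
    have heq : ((s, (0 : Fin k → ZMod l)) + ((0 : Fin k → ZMod l), u)) = (s, u) := by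
      apply Prod.ext
      · show s + 0 = s; rw [add_zero]
      · show (0 : Fin k → ZMod l) + u = u; rw [zero_add]
    rwa [heq] at this
  have hEMR : ∀ s u : Fin k → ZMod l, EM ξ s u ∈ R := by
    intro s u
    obtain ⟨γ, hγ0, hγR⟩ := keyAll s u
    have := R.smul_mem hγR γ⁻¹
    rwa [smul_smul, inv_mul_cancel₀ hγ0, one_smul] at this
  have hconst : ∀ x : Matrix (Fin k → ZMod l) (Fin k → ZMod l) F,
      Function.const (ZMod l) x ∈ Ψ.range := by
    intro x
    have hspan := mem_span_EM hchar hξp x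
    have hle : Submodule.span F
        (Set.range fun p : (Fin k → ZMod l) × (Fin k → ZMod l) => EM ξ p.1 p.2)
        ≤ Subalgebra.toSubmodule R := by
      rw [Submodule.span_le]
      rintro _ ⟨p, rfl⟩
      exact hEMR p.1 p.2
    exact (hmemR x).mp (hle hspan)
  -- the last generator separates the blocks
  have hklt : 2 * k < m := by omega
  have huL : uD l k (2 * k) = 0 := uD_eq_zero _ (by omega : ¬ (2 * k) / 2 < k)
  have hlastval : Ψ (XC F l ξ ⟨2 * k, hklt⟩)
      = fun t : ZMod l => chi ξ t • EM ξ (sD l k (2 * k)) 0 := by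
    funext t
    show PhiT hl hξp hν k hm t (XC F l ξ ⟨2 * k, hklt⟩) = _
    rw [PhiT_XC]
    have hcoe : ((⟨2 * k, hklt⟩ : Fin m) : ℕ) = 2 * k := rfl
    rw [hcoe, genM, if_pos rfl, huL]
  have hdinv : EM ξ (sD l k (2 * k)) 0 * EM ξ (-(sD l k (2 * k))) 0 = 1 := by
    rw [EM_mul hξ, dotV_zero_right, neg_zero, chi_zero, one_smul, add_neg_cancel,
      add_zero, EM_zero]
  have hq : (fun t : ZMod l => chi ξ t
      • (1 : Matrix (Fin k → ZMod l) (Fin k → ZMod l) F)) ∈ Ψ.range := by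
    have h1 : Ψ (XC F l ξ ⟨2 * k, hklt⟩) ∈ Ψ.range := ⟨_, rfl⟩
    rw [hlastval] at h1
    have h3 := Ψ.range.mul_mem h1 (hconst (EM ξ (-(sD l k (2 * k))) 0))
    have heq : ((fun t : ZMod l => chi ξ t • EM ξ (sD l k (2 * k)) 0)
        * Function.const (ZMod l) (EM ξ (-(sD l k (2 * k))) 0))
        = fun t : ZMod l => chi ξ t • (1 : Matrix (Fin k → ZMod l) (Fin k → ZMod l) F) := by
      funext t
      show (chi ξ t • EM ξ (sD l k (2 * k)) 0) * EM ξ (-(sD l k (2 * k))) 0 = chi ξ t • 1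
      rw [smul_mul_assoc, hdinv]
    rwa [heq] at h3
  have hsingle1 : ∀ t₀ : ZMod l,
      Pi.single t₀ (1 : Matrix (Fin k → ZMod l) (Fin k → ZMod l) F) ∈ Ψ.range := by
    intro t₀
    have hmem : (∑ n ∈ Finset.range l, ((chi ξ t₀)⁻¹) ^ n
        • (fun t : ZMod l => chi ξ t
            • (1 : Matrix (Fin k → ZMod l) (Fin k → ZMod l) F)) ^ n) ∈ Ψ.range :=
      Subalgebra.sum_mem _ fun n _ => Subalgebra.smul_mem _ (Subalgebra.pow_mem _ hq n) _
    have heval : (∑ n ∈ Finset.range l, ((chi ξ t₀)⁻¹) ^ n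
        • (fun t : ZMod l => chi ξ t
            • (1 : Matrix (Fin k → ZMod l) (Fin k → ZMod l) F)) ^ n)
        = (l : F) • (Pi.single t₀ 1
            : ZMod l → Matrix (Fin k → ZMod l) (Fin k → ZMod l) F) := by
      funext t
      rw [Finset.sum_apply]
      have hterm : ∀ n : ℕ, (((chi ξ t₀)⁻¹) ^ n
          • (fun t : ZMod l => chi ξ t
              • (1 : Matrix (Fin k → ZMod l) (Fin k → ZMod l) F)) ^ n) t
          = ((chi ξ t₀)⁻¹ * chi ξ t) ^ n
            • (1 : Matrix (Fin k → ZMod l) (Fin k → ZMod l) F) := by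
        intro n
        rw [Pi.smul_apply, Pi.pow_apply, smul_pow, one_pow, smul_smul, ← mul_pow]
      rw [Finset.sum_congr rfl fun n _ => hterm n, ← Finset.sum_smul]
      by_cases hts : t = t₀
      · subst hts
        rw [inv_mul_cancel₀ (chi_ne_zero hξ t), Pi.smul_apply, Pi.single_eq_same]
        simp
      · have hηl : ((chi ξ t₀)⁻¹ * chi ξ t) ^ l = 1 := by
          rw [mul_pow, inv_pow, chi_pow_l hξ, chi_pow_l hξ, inv_one, one_mul]
        have hη1 : (chi ξ t₀)⁻¹ * chi ξ t ≠ 1 := by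
          intro hc
          apply hts
          have hcc : chi ξ t₀ = chi ξ t := by
            rwa [inv_mul_eq_one₀ (chi_ne_zero hξ t₀)] at hc
          have hval : t₀.val = t.val :=
            hξp.pow_inj (ZMod.val_lt t₀) (ZMod.val_lt t) hcc
          calc t = ((t.val : ℕ) : ZMod l) := (ZMod.natCast_rightInverse t).symm
            _ = ((t₀.val : ℕ) : ZMod l) := by rw [hval]
            _ = t₀ := ZMod.natCast_rightInverse t₀
        have hgeom : (∑ n ∈ Finset.range l, ((chi ξ t₀)⁻¹ * chi ξ t) ^ n) = 0 := by
          have h := geom_sum_mul ((chi ξ t₀)⁻¹ * chi ξ t) l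
          rw [hηl, sub_self] at h
          rcases mul_eq_zero.mp h with h' | h'
          · exact h'
          · exact absurd (by rwa [sub_eq_zero] at h') hη1
        rw [hgeom, zero_smul, Pi.smul_apply, Pi.single_eq_of_ne hts, smul_zero]
    have hfin := Ψ.range.smul_mem hmem (l : F)⁻¹
    rw [heval, smul_smul, inv_mul_cancel₀ hchar, one_smul] at hfin
    exact hfin
  rw [eq_top_iff]
  rintro f -
  have hf : f = ∑ t : ZMod l,
      Pi.single t (1 : Matrix (Fin k → ZMod l) (Fin k → ZMod l) F)
        * Function.const (ZMod l) (f t) := by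
    funext t'
    rw [Finset.sum_apply]
    rw [Finset.sum_eq_single t' (fun t _ ht => by
      rw [Pi.mul_apply, Pi.single_eq_of_ne (Ne.symm ht), zero_mul]) (by simp)]
    rw [Pi.mul_apply, Pi.single_eq_same, one_mul]
    rfl
  rw [hf]
  exact Subalgebra.sum_mem _ fun t _ => Ψ.range.mul_mem (hsingle1 t) (hconst (f t))


lemma finrank_target [NeZero l] (k : ℕ) :
    Module.finrank F (ZMod l → Matrix (Fin k → ZMod l) (Fin k → ZMod l) F)
      = l ^ (2 * k + 1) := by
  rw [Module.finrank_pi_fintype F]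
  have hM : Module.finrank F (Matrix (Fin k → ZMod l) (Fin k → ZMod l) F)
      = l ^ k * l ^ k := by
    rw [Module.finrank_matrix]
    simp [Fintype.card_fun, ZMod.card]
  simp only [hM]
  rw [Finset.sum_const, Finset.card_univ, ZMod.card, smul_eq_mul]
  ring

/-- reindexing a product algebra -/
def piLeftAlgEquiv (F : Type*) [CommSemiring F] {ι ι' : Type*} (e : ι ≃ ι')
    (A : Type*) [Semiring A] [Algebra F A] : (ι' → A) ≃ₐ[F] (ι → A) where
  toFun f i := f (e i)
  invFun g i' := g (e.symm i')
  left_inv f := funext fun i' => by simp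
  right_inv g := funext fun i => by simp
  map_mul' f g := rfl
  map_add' f g := rfl
  commutes' r := rfl

end ClgAux

theorem stmt_11 (F : Type*) [Field F] [IsAlgClosed F] (l : ℕ) (hl : 1 < l)
    (hchar : (l : F) ≠ 0) (ξ : F) (hξ : IsPrimitiveRoot ξ l)
    (m : ℕ) (hm : 0 < m) (hmodd : Odd m) :
    Nonempty (Clg F l ξ (Fin m) ≃ₐ[F]
      (Fin l → Matrix (Fin (l ^ ((m - 1) / 2))) (Fin (l ^ ((m - 1) / 2))) F)) := by
  haveI : NeZero l := ⟨by omega⟩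
  obtain ⟨k, hk⟩ := hmodd
  have hmk : m = 2 * k + 1 := by omega
  have hkeq : (m - 1) / 2 = k := by omega
  obtain ⟨ν, hν⟩ := IsAlgClosed.exists_pow_nat_eq (ξ ^ l.choose 2) (by omega : 0 < l)
  set Ψ := ClgAux.PsiA (m := m) hl hξ hν k hmk with hΨ
  have hsurj := ClgAux.PsiA_surjective hl hchar hξ hν k hmk
  haveI hfin : Module.Finite F (Clg F l ξ (Fin m)) := ClgAux.finite_Clg F l ξ hl
  have hinj : Function.Injective Ψ := by
    have hr : LinearMap.range Ψ.toLinearMap = ⊤ := LinearMap.range_eq_top.mpr hsurj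
    have h4 := LinearMap.finrank_range_add_finrank_ker Ψ.toLinearMap
    rw [hr, finrank_top] at h4
    have h3 : Module.finrank F
        (ZMod l → Matrix (Fin k → ZMod l) (Fin k → ZMod l) F) = l ^ m := by
      rw [ClgAux.finrank_target, hmk]
    have h2 : Module.finrank F (Clg F l ξ (Fin m)) ≤ l ^ m :=
      ClgAux.finrank_Clg_le F l ξ hl
    rw [h3] at h4
    have h5 : Module.finrank F ↥(LinearMap.ker Ψ.toLinearMap) = 0 := by omega
    have h6 : LinearMap.ker Ψ.toLinearMap = ⊥ := Submodule.finrank_eq_zero.mp h5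
    exact LinearMap.ker_eq_bot.mp h6
  let e1 := AlgEquiv.ofBijective Ψ ⟨hinj, hsurj⟩
  let eV : (Fin k → ZMod l) ≃ Fin (l ^ ((m - 1) / 2)) :=
    Fintype.equivFinOfCardEq (by
      rw [Fintype.card_fun, ZMod.card, Fintype.card_fin, hkeq])
  let e2 := AlgEquiv.piCongrRight
    (fun _ : ZMod l => Matrix.reindexAlgEquiv F F eV)
  let eT : Fin l ≃ ZMod l := (Fintype.equivFinOfCardEq (ZMod.card l)).symm
  let e3 := ClgAux.piLeftAlgEquiv F eT
    (Matrix (Fin (l ^ ((m - 1) / 2))) (Fin (l ^ ((m - 1) / 2))) F)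
  exact ⟨(e1.trans e2).trans e3⟩
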